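/- arXiv:2209.05647 — 3 statements merged into one kernel-verified Lean document; each statement's English description precedes it below -/
import Mathlib

section
/- Let 𝒜 be a 3-order real tensor of size I₁ × J₁ × K, ℬ a 3-order real tensor of size K × J₂ × I₂, and let A ∈ ℝ^{M×J₁} and B ∈ ℝ^{M×J₂} be matrices with the same number M of rows. Then the mode-2 slices-Hadamard product of the mode-2 products equals the mode-2 product of the subchain product with the transposed Khatri-Rao matrix: (𝒜 ×₂ A) ⊛₂ (ℬ ×₂ B) = (𝒜 ⊠₂ ℬ) ×₂ (Bᵀ ⊙ Aᵀ)ᵀ, where ((Bᵀ ⊙ Aᵀ)ᵀ)(t,(j₁,j₂)) = A(t,j₁)·B(t,j₂). Equivalently, element-wise, for all i₁ ∈ [I₁], t ∈ [M], i₂ ∈ [I₂]: ∑_{k=1}^{K} (∑_{j₁=1}^{J₁} A(t,j₁) 𝒜(i₁,j₁,k)) · (∑_{j₂=1}^{J₂} B(t,j₂) ℬ(k,j₂,i₂)) = ∑_{j₁=1}^{J₁} ∑_{j₂=1}^{J₂} A(t,j₁) B(t,j₂) · (∑_{k=1}^{K} 𝒜(i₁,j₁,k) ℬ(k,j₂,i₂)).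 -/
/-- Proposition 3.6 (element-wise): the mode-2 slices-Hadamard product of mode-2 products
equals the mode-2 product of the subchain product with the transposed Khatri-Rao matrix,
`(𝒜 ×₂ A) ⊛₂ (ℬ ×₂ B) = (𝒜 ⊠₂ ℬ) ×₂ (Bᵀ ⊙ Aᵀ)ᵀ`. -/
theorem slicesHadamard_mode2_khatriRao
    (I₁ J₁ K J₂ I₂ M : ℕ)
    (𝒜 : Fin I₁ → Fin J₁ → Fin K → ℝ)
    (ℬ : Fin K → Fin J₂ → Fin I₂ → ℝ)
    (A : Fin M → Fin J₁ → ℝ) (B : Fin M → Fin J₂ → ℝ) :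
    ∀ (i₁ : Fin I₁) (t : Fin M) (i₂ : Fin I₂),
      ∑ k : Fin K, (∑ j₁ : Fin J₁, A t j₁ * 𝒜 i₁ j₁ k) *
          (∑ j₂ : Fin J₂, B t j₂ * ℬ k j₂ i₂)
        = ∑ j₁ : Fin J₁, ∑ j₂ : Fin J₂,
            A t j₁ * B t j₂ * (∑ k : Fin K, 𝒜 i₁ j₁ k * ℬ k j₂ i₂) := by
  intro i₁ t i₂
  simp only [Finset.sum_mul, Finset.mul_sum]
  simp only [Finset.sum_comm (s := Finset.univ (α := Fin J₂)) (t := Finset.univ (α := Fin J₁))]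
  rw [Finset.sum_comm (s := Finset.univ (α := Fin K)) (t := Finset.univ (α := Fin J₁))]
  refine Finset.sum_congr rfl fun j₁ _ => ?_
  rw [Finset.sum_comm (s := Finset.univ (α := Fin K)) (t := Finset.univ (α := Fin J₂))]
  exact Finset.sum_congr rfl fun j₂ _ => Finset.sum_congr rfl fun k _ => by ring
end

section
/- Let m ≥ 1, and for n = 1,2 let H_n : [I_n] → ℤ/mℤ be arbitrary hash maps, s_n : [I_n] → ℝ arbitrary sign functions, and A : [I₁] → ℝ^{R₁×R₂}, B : [I₂] → ℝ^{R₂×R₃} families of matrices (the lateral slices of two TR-cores). Then for every t ∈ ℤ/mℤ, the t-th slice of the TensorSketch of the subchain product equals the cyclic convolution of the individual CountSketches: ∑_{(i₁,i₂) : H₁(i₁)+H₂(i₂)=t} s₁(i₁) s₂(i₂) · (A(i₁) · B(i₂)) = ∑_{t₁ ∈ ℤ/mℤ} (∑_{i₁ : H₁(i₁)=t₁} s₁(i₁) A(i₁)) · (∑_{i₂ : H₂(i₂)=t−t₁} s₂(i₂) B(i₂)), where · between matrices denotes matrix multiplication and the outer sums of matrices are entrywise. -/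
open Finset

/-- Proposition 3.7 (algebraic content): each slice of the TensorSketch of the subchain
product equals the cyclic convolution of the individual CountSketches. -/
theorem tensorSketch_subchain_eq_cyclicConv
    (m : ℕ) [NeZero m] (I₁ I₂ R₁ R₂ R₃ : ℕ)
    (H₁ : Fin I₁ → ZMod m) (H₂ : Fin I₂ → ZMod m)
    (s₁ : Fin I₁ → ℝ) (s₂ : Fin I₂ → ℝ)
    (A : Fin I₁ → Matrix (Fin R₁) (Fin R₂) ℝ)
    (B : Fin I₂ → Matrix (Fin R₂) (Fin R₃) ℝ) :
    ∀ t : ZMod m,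
      (∑ p ∈ Finset.univ.filter (fun p : Fin I₁ × Fin I₂ => H₁ p.1 + H₂ p.2 = t),
          (s₁ p.1 * s₂ p.2) • (A p.1 * B p.2))
        = ∑ t₁ : ZMod m,
            (∑ i₁ ∈ Finset.univ.filter (fun i₁ => H₁ i₁ = t₁), s₁ i₁ • A i₁) *
            (∑ i₂ ∈ Finset.univ.filter (fun i₂ => H₂ i₂ = t - t₁), s₂ i₂ • B i₂) := by
  intro t
  rw [← Finset.sum_fiberwise (Finset.univ.filter (fun p : Fin I₁ × Fin I₂ => H₁ p.1 + H₂ p.2 = t))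
    (fun p => H₁ p.1) (fun p => (s₁ p.1 * s₂ p.2) • (A p.1 * B p.2))]
  refine Finset.sum_congr rfl fun t₁ _ => ?_
  rw [Matrix.sum_mul]; simp_rw [Matrix.mul_sum]
  rw [Finset.filter_filter, ← Finset.sum_product']
  rw [← Finset.filter_product]
  refine Finset.sum_congr ?_ fun p _ => ?_
  · rw [Finset.univ_product_univ]
    apply Finset.filter_congr
    intro p _
    constructor
    · rintro ⟨h1, h2⟩
      exact ⟨h2, by rw [← h1, h2]; ring⟩
    · rintro ⟨h1, h2⟩
      exact ⟨by rw [h1, h2]; ring, h1⟩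
  · rw [Matrix.smul_mul, Matrix.mul_smul, smul_smul]
end

section
/- Let N ≥ 1, R ≥ 1, m ≥ 1, and for each n ∈ {1,…,N} let J_n be a positive integer, H_n : [J_n] → ℤ/mℤ an arbitrary hash map, s_n : [J_n] → ℝ an arbitrary sign function, and G_n : [J_n] → ℝ^{R×R} a family of square matrices (the lateral slices of a core). Then for every t ∈ ℤ/mℤ: ∑_{(j₁,…,j_N) : H₁(j₁)+⋯+H_N(j_N)=t} (∏_{n=1}^{N} s_n(j_n)) · (G₁(j₁)·G₂(j₂)⋯G_N(j_N)) = ∑_{(t₁,…,t_N) ∈ (ℤ/mℤ)^N : t₁+⋯+t_N=t} ∏_{n=1}^{N} (∑_{j : H_n(j)=t_n} s_n(j) G_n(j)), where products of matrices are taken in the order n = 1,…,N. -/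
open Finset

/-- General-`N` algebraic content of Proposition 3.7: the TensorSketch of the mode-2
subchain product of `N` cores is the `N`-fold cyclic convolution of the individual
CountSketches. -/
theorem tensorSketch_subchainN_eq_cyclicConv
    (N R m : ℕ) (hN : 1 ≤ N) (hR : 1 ≤ R) [NeZero m]
    (J : Fin N → ℕ) (hJ : ∀ n, 0 < J n)
    (H : ∀ n : Fin N, Fin (J n) → ZMod m)
    (s : ∀ n : Fin N, Fin (J n) → ℝ)
    (G : ∀ n : Fin N, Fin (J n) → Matrix (Fin R) (Fin R) ℝ) :
    ∀ t : ZMod m,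
      (∑ j ∈ Finset.univ.filter
            (fun j : (∀ n : Fin N, Fin (J n)) => (∑ n : Fin N, H n (j n)) = t),
          (∏ n : Fin N, s n (j n)) • ((List.finRange N).map (fun n => G n (j n))).prod)
        = ∑ τ ∈ Finset.univ.filter
              (fun τ : Fin N → ZMod m => (∑ n : Fin N, τ n) = t),
            ((List.finRange N).map
              (fun n => ∑ j ∈ Finset.univ.filter (fun j : Fin (J n) => H n j = τ n),
                s n j • G n j)).prod := by
  intro t
  classical
  set f := MultilinearMap.mkPiAlgebraFin ℝ N (Matrix (Fin R) (Fin R) ℝ) with hf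
  have key : ∀ j : (∀ n : Fin N, Fin (J n)),
      (∏ n : Fin N, s n (j n)) • ((List.finRange N).map (fun n => G n (j n))).prod
        = f (fun n => s n (j n) • G n (j n)) := by
    intro j
    rw [f.map_smul_univ]
    simp [hf, MultilinearMap.mkPiAlgebraFin_apply, List.ofFn_eq_map]
  have key2 : ∀ τ : Fin N → ZMod m,
      ((List.finRange N).map
        (fun n => ∑ j ∈ Finset.univ.filter (fun j : Fin (J n) => H n j = τ n),
          s n j • G n j)).prod
      = ∑ g ∈ Fintype.piFinset
            (fun n => Finset.univ.filter (fun j : Fin (J n) => H n j = τ n)),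
          f (fun n => s n (g n) • G n (g n)) := by
    intro τ
    rw [← f.map_sum_finset (fun n j => s n j • G n j)
      (fun n => Finset.univ.filter (fun j : Fin (J n) => H n j = τ n))]
    simp [hf, MultilinearMap.mkPiAlgebraFin_apply, List.ofFn_eq_map]
  simp only [key, key2]
  have hpi : ∀ τ : Fin N → ZMod m,
      Fintype.piFinset (fun n => Finset.univ.filter (fun j : Fin (J n) => H n j = τ n))
        = Finset.univ.filter
            (fun g : ∀ n : Fin N, Fin (J n) => (fun n => H n (g n)) = τ) := by
    intro τ
    ext g
    simp [Fintype.mem_piFinset, funext_iff]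
  simp only [hpi]
  rw [Finset.sum_fiberwise_eq_sum_filter Finset.univ
    (Finset.univ.filter (fun τ : Fin N → ZMod m => (∑ n : Fin N, τ n) = t))
    (fun g : ∀ n : Fin N, Fin (J n) => fun n => H n (g n))
    (fun g => f (fun n => s n (g n) • G n (g n)))]
  simp
end
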